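/- Let G be the group presented by ⟨a, s, t | a² = 1, [a, t⁻¹at] = 1, [s,t] = 1, s⁻¹as = a·(t⁻¹at)⟩. Then every element g of G can be written in the form g = u · sᵖ tᑫ for some integers p, q, where u is a (possibly empty) finite product of elements each of which is of the form s⁻ⁱ a sⁱ with i < 0 or of the form t⁻ʲ a tʲ with j ∈ ℤ. -/

import Mathlib

/-- The three generators `a`, `s`, `t`. -/
inductive Gen : Type
  | a | s | t

/-- The relators of the presentation
`⟨a, s, t | a² = 1, [a, t⁻¹at] = 1, [s,t] = 1, s⁻¹as = a·(t⁻¹at)⟩`,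
where `[x,y] = x⁻¹y⁻¹xy`. -/
def rels : Set (FreeGroup Gen) :=
  { (FreeGroup.of Gen.a) ^ 2,
    (FreeGroup.of Gen.a)⁻¹ *
        ((FreeGroup.of Gen.t)⁻¹ * FreeGroup.of Gen.a * FreeGroup.of Gen.t)⁻¹ *
        FreeGroup.of Gen.a *
        ((FreeGroup.of Gen.t)⁻¹ * FreeGroup.of Gen.a * FreeGroup.of Gen.t),
    (FreeGroup.of Gen.s)⁻¹ * (FreeGroup.of Gen.t)⁻¹ * FreeGroup.of Gen.s * FreeGroup.of Gen.t,
    ((FreeGroup.of Gen.s)⁻¹ * FreeGroup.of Gen.a * FreeGroup.of Gen.s)⁻¹ *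
        (FreeGroup.of Gen.a *
          ((FreeGroup.of Gen.t)⁻¹ * FreeGroup.of Gen.a * FreeGroup.of Gen.t)) }

/-- The group `G` of the paper. -/
abbrev G := PresentedGroup rels

def a : G := PresentedGroup.of Gen.a
def s : G := PresentedGroup.of Gen.s
def t : G := PresentedGroup.of Gen.t

namespace NFAux

/-- relators are killed in the quotient -/
lemma mk_rel {r : FreeGroup Gen} (hr : r ∈ rels) : PresentedGroup.mk rels r = 1 := by
  have : r ∈ Subgroup.normalClosure rels := Subgroup.subset_normalClosure hr
  exact (QuotientGroup.eq_one_iff r).mpr this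

lemma ha : a * a = 1 := by
  have h := mk_rel (r := (FreeGroup.of Gen.a) ^ 2) (by simp [rels])
  rw [pow_two, map_mul] at h
  exact h

lemma a_inv : a⁻¹ = a :=
  inv_eq_of_mul_eq_one_right ha

lemma hst : s * t = t * s := by
  have h := mk_rel (r := (FreeGroup.of Gen.s)⁻¹ * (FreeGroup.of Gen.t)⁻¹ *
      FreeGroup.of Gen.s * FreeGroup.of Gen.t) (by simp [rels])
  simp only [map_mul, map_inv] at h
  have h2 := congrArg (fun x => t * s * x) h
  simp only [mul_one] at h2
  calc s * t = t * s * (s⁻¹ * t⁻¹ * s * t) := by group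
    _ = t * s := h2

lemma comm_st : Commute s t := hst

/-- conjugation `x ↦ x^g` -/
def c (g x : G) : G := g⁻¹ * x * g

lemma c_c (g h x : G) : c g (c h x) = c (h * g) x := by
  unfold c; group

lemma c_mul (g x y : G) : c g (x * y) = c g x * c g y := by
  unfold c; group

lemma c_one (g : G) : c g 1 = 1 := by unfold c; group

lemma c_id (x : G) : c 1 x = x := by unfold c; group

lemma rel4 : c s a = a * c t a := by
  have h := mk_rel (r := ((FreeGroup.of Gen.s)⁻¹ * FreeGroup.of Gen.a * FreeGroup.of Gen.s)⁻¹ *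
      (FreeGroup.of Gen.a * ((FreeGroup.of Gen.t)⁻¹ * FreeGroup.of Gen.a * FreeGroup.of Gen.t)))
      (by simp [rels])
  simp only [map_mul, map_inv] at h
  have : (s⁻¹ * a * s)⁻¹ * (a * (t⁻¹ * a * t)) = 1 := h
  have := inv_mul_eq_one.mp this
  exact this

lemma rel4' : c t a = a * c s a := by
  rw [rel4, ← mul_assoc, ha, one_mul]

/-- conjugates of `a` square to one -/
lemma c_a_sq (g : G) : c g a * c g a = 1 := by
  rw [← c_mul, ha, c_one]

lemma c_a_inv (g : G) : (c g a)⁻¹ = c g a :=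
  inv_eq_of_mul_eq_one_right (c_a_sq g)

lemma c_inv (g x : G) : (c g x)⁻¹ = c g x⁻¹ := by
  unfold c; group

/-- the lamps -/
def B (j : ℤ) : G := c (t ^ j) a
def A (i : ℤ) : G := c (s ^ i) a

lemma B_def (j : ℤ) : B j = (t ^ j)⁻¹ * a * t ^ j := rfl
lemma A_def (i : ℤ) : A i = (s ^ i)⁻¹ * a * s ^ i := rfl

lemma B_zero : B 0 = a := by simp [B, c]
lemma A_zero : A 0 = a := by simp [A, c]

lemma B_inv (j : ℤ) : (B j)⁻¹ = B j := c_a_inv _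
lemma A_inv (i : ℤ) : (A i)⁻¹ = A i := c_a_inv _

lemma ct_B (j : ℤ) : c t (B j) = B (j + 1) := by
  rw [B, c_c, ← zpow_add_one]; rfl

lemma cti_B (j : ℤ) : c t⁻¹ (B j) = B (j - 1) := by
  rw [B, c_c, ← zpow_sub_one]; rfl

lemma cs_A (i : ℤ) : c s (A i) = A (i + 1) := by
  rw [A, c_c, ← zpow_add_one]; rfl

lemma csi_A (i : ℤ) : c s⁻¹ (A i) = A (i - 1) := by
  rw [A, c_c, ← zpow_sub_one]; rfl

lemma comm_s_tpow (j : ℤ) : t ^ j * s = s * t ^ j :=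
  (comm_st.zpow_right j).symm

/-- conjugating a `t`-lamp by `s`. -/
lemma comm_spow_t (i : ℤ) : s ^ i * t = t * s ^ i :=
  comm_st.zpow_left i

lemma cs_B (j : ℤ) : c s (B j) = B j * B (j + 1) := by
  simp only [B]
  rw [c_c, comm_s_tpow, ← c_c, rel4, c_mul, c_c]
  congr 2
  rw [← zpow_one_add, add_comm]

/-- conjugating an `s`-lamp by `t`. -/
lemma ct_A (i : ℤ) : c t (A i) = A i * A (i + 1) := by
  simp only [A]
  rw [c_c, comm_spow_t, ← c_c, rel4', c_mul, c_c]
  congr 2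
  rw [← zpow_one_add, add_comm]

/-- inverse-direction conjugation of a `t`-lamp by `s`: recursion. -/
lemma csi_B_succ (j : ℤ) : c s⁻¹ (B (j + 1)) = c s⁻¹ (B j) * B j := by
  have h := congrArg (c s⁻¹) (cs_B j)
  rw [c_c, mul_inv_cancel, c_id, c_mul] at h
  -- h : B j = c s⁻¹ (B j) * c s⁻¹ (B (j+1))
  have h2 := congrArg (fun x => (c s⁻¹ (B j))⁻¹ * x) h
  rw [← mul_assoc, inv_mul_cancel, one_mul] at h2
  rw [← h2, c_inv, B_inv]

lemma csi_B_pred (j : ℤ) : c s⁻¹ (B (j - 1)) = c s⁻¹ (B j) * B (j - 1) := by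
  have h := csi_B_succ (j - 1)
  rw [sub_add_cancel] at h
  have h2 := congrArg (fun x => x * (B (j - 1))⁻¹) h
  rw [mul_assoc, mul_inv_cancel, mul_one] at h2
  rw [← h2, B_inv]

/-- inverse-direction conjugation of an `s`-lamp by `t`: recursion. -/
lemma cti_A_pred (i : ℤ) : c t⁻¹ (A i) = A i * c t⁻¹ (A (i + 1)) := by
  have h := congrArg (c t⁻¹) (ct_A i)
  rw [c_c, mul_inv_cancel, c_id, c_mul] at h
  -- h : A i = c t⁻¹ (A i) * c t⁻¹ (A (i+1))
  have h2 := congrArg (fun x => x * (c t⁻¹ (A (i + 1)))⁻¹) h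
  rw [mul_assoc, mul_inv_cancel, mul_one] at h2
  rw [← h2, c_inv, A_inv]

/-- the set of allowed lamps, matching the statement. -/
def LampSet : Set G :=
  {x | (∃ i : ℤ, i < 0 ∧ x = (s ^ i)⁻¹ * a * s ^ i) ∨
       (∃ j : ℤ, x = (t ^ j)⁻¹ * a * t ^ j)}

lemma B_mem (j : ℤ) : B j ∈ LampSet := Or.inr ⟨j, rfl⟩
lemma A_mem {i : ℤ} (hi : i < 0) : A i ∈ LampSet := Or.inl ⟨i, hi, rfl⟩

/-- `A i` is always a lamp when `i ≤ 0`. -/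
lemma A_mem' {i : ℤ} (hi : i ≤ 0) : A i ∈ LampSet := by
  rcases lt_or_eq_of_le hi with h | h
  · exact A_mem h
  · rw [h, A_zero, ← B_zero]; exact B_mem 0

/-- the submonoid generated by the lamps. -/
def M : Submonoid G := Submonoid.closure LampSet

lemma lamp_mem {x : G} (hx : x ∈ LampSet) : x ∈ M := Submonoid.subset_closure hx

/-- extend conjugation stability from lamps to the whole monoid. -/
lemma conj_mem_of_lamps {g : G} (h : ∀ x ∈ LampSet, c g x ∈ M) :
    ∀ m ∈ M, c g m ∈ M := by
  intro m hm
  induction hm using Submonoid.closure_induction with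
  | mem x hx => exact h x hx
  | one => rw [c_one]; exact M.one_mem
  | mul x y _ _ hx hy => rw [c_mul]; exact M.mul_mem hx hy

lemma ct_lamp : ∀ x ∈ LampSet, c t x ∈ M := by
  rintro x (⟨i, hi, rfl⟩ | ⟨j, rfl⟩)
  · rw [← A_def, ct_A]
    exact M.mul_mem (lamp_mem (A_mem hi)) (lamp_mem (A_mem' (by omega)))
  · rw [← B_def, ct_B]
    exact lamp_mem (B_mem _)

lemma cs_lamp : ∀ x ∈ LampSet, c s x ∈ M := by
  rintro x (⟨i, hi, rfl⟩ | ⟨j, rfl⟩)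
  · rw [← A_def, cs_A]
    exact lamp_mem (A_mem' (by omega))
  · rw [← B_def, cs_B]
    exact M.mul_mem (lamp_mem (B_mem _)) (lamp_mem (B_mem _))

lemma cti_A_mem : ∀ k : ℕ, c t⁻¹ (A (-(k : ℤ))) ∈ M := by
  intro k
  induction k with
  | zero =>
    have : c t⁻¹ (A 0) = B (-1) := by
      rw [A_zero, B, zpow_neg_one]
    rw [Nat.cast_zero, neg_zero, this]
    exact lamp_mem (B_mem _)
  | succ k ih =>
    rw [cti_A_pred]
    have harg : (-((k : ℤ) + 1) + 1) = -(k : ℤ) := by ring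
    push_cast
    rw [harg]
    exact M.mul_mem (lamp_mem (A_mem (by omega))) ih

lemma csi_B_mem : ∀ j : ℤ, c s⁻¹ (B j) ∈ M := by
  intro j
  induction j using Int.induction_on with
  | zero =>
    have : c s⁻¹ (B 0) = A (-1) := by
      rw [B_zero, A, zpow_neg_one]
    rw [this]
    exact lamp_mem (A_mem (by omega))
  | succ k ih =>
    rw [csi_B_succ]
    exact M.mul_mem ih (lamp_mem (B_mem _))
  | pred k ih =>
    rw [csi_B_pred]
    exact M.mul_mem ih (lamp_mem (B_mem _))

lemma cti_lamp : ∀ x ∈ LampSet, c t⁻¹ x ∈ M := by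
  rintro x (⟨i, hi, rfl⟩ | ⟨j, rfl⟩)
  · rw [← A_def]
    obtain ⟨k, rfl⟩ : ∃ k : ℕ, i = -(k : ℤ) := ⟨i.natAbs, by omega⟩
    exact cti_A_mem k
  · rw [← B_def, cti_B]
    exact lamp_mem (B_mem _)

lemma csi_lamp : ∀ x ∈ LampSet, c s⁻¹ x ∈ M := by
  rintro x (⟨i, hi, rfl⟩ | ⟨j, rfl⟩)
  · rw [← A_def, csi_A]
    exact lamp_mem (A_mem (by omega))
  · rw [← B_def]
    exact csi_B_mem j

/-- `Good g`: conjugation by `g` and `g⁻¹` preserves `M`. -/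
def Good (g : G) : Prop :=
  (∀ m ∈ M, c g m ∈ M) ∧ (∀ m ∈ M, c g⁻¹ m ∈ M)

lemma good_s : Good s :=
  ⟨conj_mem_of_lamps cs_lamp, conj_mem_of_lamps csi_lamp⟩

lemma good_t : Good t :=
  ⟨conj_mem_of_lamps ct_lamp, conj_mem_of_lamps cti_lamp⟩

lemma good_one : Good 1 := by
  constructor <;> intro m hm <;> simp [c_id, inv_one, hm]

lemma good_mul {g h : G} (hg : Good g) (hh : Good h) : Good (g * h) := by
  constructor
  · intro m hm
    have : c (g * h) m = c h (c g m) := (c_c h g m).symm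
    rw [this]
    exact hh.1 _ (hg.1 _ hm)
  · intro m hm
    have : c (g * h)⁻¹ m = c g⁻¹ (c h⁻¹ m) := by rw [c_c, ← mul_inv_rev]
    rw [this]
    exact hg.2 _ (hh.2 _ hm)

lemma good_inv {g : G} (hg : Good g) : Good g⁻¹ := by
  refine ⟨hg.2, ?_⟩
  rw [inv_inv]
  exact hg.1

lemma good_zpow {g : G} (hg : Good g) : ∀ n : ℤ, Good (g ^ n) := by
  intro n
  induction n using Int.induction_on with
  | zero => rw [zpow_zero]; exact good_one
  | succ k ih => rw [zpow_add_one]; exact good_mul ih hg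
  | pred k ih => rw [zpow_sub_one]; exact good_mul ih (good_inv hg)

lemma pow_merge (p q p' q' : ℤ) :
    (s ^ p * t ^ q) * (s ^ p' * t ^ q') = s ^ (p + p') * t ^ (q + q') := by
  have hc : t ^ q * s ^ p' = s ^ p' * t ^ q :=
    ((comm_st.symm).zpow_zpow q p')
  rw [zpow_add, zpow_add]
  calc s ^ p * t ^ q * (s ^ p' * t ^ q')
      = s ^ p * (t ^ q * s ^ p') * t ^ q' := by group
    _ = s ^ p * (s ^ p' * t ^ q) * t ^ q' := by rw [hc]
    _ = s ^ p * s ^ p' * (t ^ q * t ^ q') := by group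

/-- main induction: every element has the normal form with monoid part. -/
lemma main (g : G) : ∃ p q : ℤ, ∃ m ∈ M, g = m * s ^ p * t ^ q := by
  refine QuotientGroup.induction_on g ?_
  intro w
  induction w using FreeGroup.induction_on with
  | C1 =>
    refine ⟨0, 0, 1, M.one_mem, ?_⟩
    simp; rfl
  | of x =>
    cases x with
    | a =>
      refine ⟨0, 0, a, lamp_mem (by rw [← B_zero]; exact B_mem 0), ?_⟩
      simp [a, PresentedGroup.of]; rfl
    | s => exact ⟨1, 0, 1, M.one_mem, by simp; rfl⟩
    | t => exact ⟨0, 1, 1, M.one_mem, by simp; rfl⟩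
  | inv_of x _ =>
    cases x with
    | a =>
      refine ⟨0, 0, a, lamp_mem (by rw [← B_zero]; exact B_mem 0), ?_⟩
      show (a : G)⁻¹ = a * s ^ (0 : ℤ) * t ^ (0 : ℤ)
      rw [a_inv]
      simp
    | s =>
      refine ⟨-1, 0, 1, M.one_mem, ?_⟩
      show (s : G)⁻¹ = 1 * s ^ (-1 : ℤ) * t ^ (0 : ℤ)
      simp
    | t =>
      refine ⟨0, -1, 1, M.one_mem, ?_⟩
      show (t : G)⁻¹ = 1 * s ^ (0 : ℤ) * t ^ (-1 : ℤ)
      simp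
  | mul x y hx hy =>
    obtain ⟨p, q, m, hm, hme⟩ := hx
    obtain ⟨p', q', m', hm', hme'⟩ := hy
    have hmk : (QuotientGroup.mk (x * y) : G) =
        (QuotientGroup.mk x : G) * QuotientGroup.mk y := rfl
    refine ⟨p + p', q + q', m * ((s ^ p * t ^ q) * m' * (s ^ p * t ^ q)⁻¹), ?_, ?_⟩
    · refine M.mul_mem hm ?_
      have := (good_mul (good_zpow good_s p) (good_zpow good_t q)).2 m' hm'
      have heq : c (s ^ p * t ^ q)⁻¹ m' = (s ^ p * t ^ q) * m' * (s ^ p * t ^ q)⁻¹ := by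
        rw [c, inv_inv]
      rwa [heq] at this
    · have key : m * s ^ p * t ^ q * (m' * s ^ p' * t ^ q') =
          m * (s ^ p * t ^ q * m' * (s ^ p * t ^ q)⁻¹) * ((s ^ p * t ^ q) * (s ^ p' * t ^ q')) := by
        group
      rw [hmk, hme, hme']
      exact key.trans (by rw [pow_merge, ← mul_assoc])
end NFAux

/-- Every element `g` of `G` can be written as `g = u · sᵖ tᑫ`, where `u` is a finite
product of conjugates `s⁻ⁱ a sⁱ` (with `i < 0`) and `t⁻ʲ a tʲ` (with `j ∈ ℤ`). -/
theorem normal_form (g : G) :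
    ∃ (p q : ℤ) (u : List G),
      (∀ x ∈ u, (∃ i : ℤ, i < 0 ∧ x = (s ^ i)⁻¹ * a * s ^ i) ∨
                (∃ j : ℤ, x = (t ^ j)⁻¹ * a * t ^ j)) ∧
      g = u.prod * s ^ p * t ^ q := by
  obtain ⟨p, q, m, hm, he⟩ := NFAux.main g
  obtain ⟨l, hl, hprod⟩ := Submonoid.exists_list_of_mem_closure hm
  exact ⟨p, q, l, hl, by rw [he, hprod]⟩
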